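/- Let A be a GNF*-algebra. Then τ is also a partial right counit: (Id_{A_j} ⊗ τ) ∘ δ_{j,0} = Id_{A_j} for every j ∈ ℕ. -/

import Mathlib

open scoped TensorProduct

structure GNFData (F : Type) [Field F] where
  A : ℕ → Type
  [instAdd : ∀ i, AddCommGroup (A i)]
  [instMod : ∀ i, Module F (A i)]
  mul : ∀ i j, A i →ₗ[F] A j →ₗ[F] A (i + j)
  comul : ∀ i j, A (i + j) →ₗ[F] A i ⊗[F] A j
  unit : F →ₗ[F] A 0
  counit : A 0 →ₗ[F] F
  star : ∀ i, A i →ₗ[F] A i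

attribute [instance] GNFData.instAdd GNFData.instMod

variable {F : Type} [Field F]

/-- Cast between graded pieces along an equality of indices. -/
def GNFData.cast (G : GNFData F) {m n : ℕ} (h : m = n) : G.A m →ₗ[F] G.A n := by
  subst h; exact LinearMap.id

/-- The product as a linear map on the tensor product. -/
noncomputable def GNFData.mulMap (G : GNFData F) (i j : ℕ) :
    G.A i ⊗[F] G.A j →ₗ[F] G.A (i + j) :=
  TensorProduct.lift (G.mul i j)

/-- The axioms of a graded involutive nearly Frobenius algebra (GNF*-algebra). -/
structure IsGNF (G : GNFData F) : Prop where
  finite : ∀ i, FiniteDimensional F (G.A i)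
  assoc : ∀ i j k (x : G.A i) (y : G.A j) (z : G.A k),
    G.mul i (j + k) x (G.mul j k y z)
      = G.cast (Nat.add_assoc i j k) (G.mul (i + j) k (G.mul i j x y) z)
  left_unit : ∀ j (x : G.A j),
    G.mul 0 j (G.unit 1) x = G.cast (Nat.zero_add j).symm x
  coassoc : ∀ i j k (x : G.A (i + (j + k))),
    (TensorProduct.assoc F (G.A i) (G.A j) (G.A k)).symm
        (LinearMap.lTensor (G.A i) (G.comul j k) (G.comul i (j + k) x))
      = LinearMap.rTensor (G.A k) (G.comul i j)
          (G.comul (i + j) k (G.cast (Nat.add_assoc i j k).symm x))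
  left_counit : ∀ j (x : G.A j),
    (TensorProduct.lid F (G.A j))
        (LinearMap.rTensor (G.A j) G.counit
          (G.comul 0 j (G.cast (Nat.zero_add j).symm x))) = x
  frobenius : ∀ i j k (x : G.A i) (y : G.A (j + k)),
    G.comul (i + j) k (G.cast (Nat.add_assoc i j k).symm (G.mul i (j + k) x y))
      = LinearMap.rTensor (G.A k) (G.mulMap i j)
          ((TensorProduct.assoc F (G.A i) (G.A j) (G.A k)).symm
            (x ⊗ₜ[F] G.comul j k y))
  star_invol : ∀ i (x : G.A i), G.star i (G.star i x) = x
  star_zero : ∀ x : G.A 0, G.star 0 x = x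
  star_one : ∀ x : G.A 1, G.star 1 x = x
  star_mul : ∀ i j (x : G.A i) (y : G.A j),
    G.star (i + j) (G.mul i j x y)
      = G.cast (Nat.add_comm j i) (G.mul j i (G.star j y) (G.star i x))
  star_comul : ∀ i j (x : G.A (i + j)),
    G.comul j i (G.cast (Nat.add_comm i j) (G.star (i + j) x))
      = (TensorProduct.comm F (G.A i) (G.A j))
          (TensorProduct.map (G.star i) (G.star j) (G.comul i j x))

lemma GNF_cast_cast (G : GNFData F) {a b c : ℕ} (h1 : a = b) (h2 : b = c) (x : G.A a) :
    G.cast h2 (G.cast h1 x) = G.cast (h1.trans h2) x := by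
  subst h1; subst h2; rfl

lemma GNF_cast_self (G : GNFData F) {a : ℕ} (h : a = a) (x : G.A a) :
    G.cast h x = x := rfl

lemma GNF_star_cast (G : GNFData F) {a b : ℕ} (h : a = b) (x : G.A a) :
    G.star b (G.cast h x) = G.cast h (G.star a x) := by
  subst h; rfl

lemma GNF_comm_aux (G : GNFData F) (j : ℕ) (t : G.A 0 ⊗[F] G.A j) :
    (TensorProduct.rid F (G.A j))
        (LinearMap.lTensor (G.A j) G.counit ((TensorProduct.comm F (G.A 0) (G.A j)) t))
      = (TensorProduct.lid F (G.A j)) (LinearMap.rTensor (G.A j) G.counit t) := by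
  induction t using TensorProduct.induction_on with
  | zero => simp
  | tmul a b => simp [TensorProduct.smul_tmul']
  | add s t hs ht => simp [map_add, hs, ht]

lemma GNF_star_aux (G : GNFData F) (hG : IsGNF G) (j : ℕ) (t : G.A 0 ⊗[F] G.A j) :
    (TensorProduct.lid F (G.A j))
        (LinearMap.rTensor (G.A j) G.counit
          (TensorProduct.map (G.star 0) (G.star j) t))
      = G.star j ((TensorProduct.lid F (G.A j)) (LinearMap.rTensor (G.A j) G.counit t)) := by
  induction t using TensorProduct.induction_on with
  | zero => simp
  | tmul a b => simp [hG.star_zero]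
  | add s t hs ht => simp only [map_add, hs, ht]

/-- In a GNF*-algebra, `τ` is also a partial right counit:
`(Id_{A_j} ⊗ τ) ∘ δ_{j,0} = Id_{A_j}` for every `j`. -/
theorem GNF_right_counit (G : GNFData F) (hG : IsGNF G) :
    ∀ (j : ℕ) (x : G.A j),
      (TensorProduct.rid F (G.A j))
        (LinearMap.lTensor (G.A j) G.counit (G.comul j 0 x)) = x := by
  intro j x
  have key : ∀ z : G.A j,
      (TensorProduct.rid F (G.A j))
        (LinearMap.lTensor (G.A j) G.counit (G.comul j 0 (G.star j z))) = G.star j z := by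
    intro z
    have h := hG.star_comul 0 j (G.cast (Nat.zero_add j).symm z)
    rw [GNF_star_cast, GNF_cast_cast] at h
    rw [show ∀ y : G.A j, G.cast ((Nat.zero_add j).symm.trans (Nat.add_comm 0 j)) y = y
      from fun _ => rfl] at h
    rw [h, GNF_comm_aux, GNF_star_aux G hG, hG.left_counit]
  have := key (G.star j x)
  rwa [hG.star_invol] at this
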